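/- Let G be a group, A a set, M, N ⊆ G with 1_G ∈ M ∩ N, S = A^(A^M), T = A^(A^N), s ∈ S^G, t ∈ T^G, and fix g ∈ G. Then σ_t(σ_s(x))(g) = x(g) for all x ∈ A^G if and only if t(g) ∘ γ_{g,N} ∘ f^{+M}_{gN, s|_{gN}} ∘ γ_{g,NM}⁻¹ = π, where π : A^{NM} → A is the evaluation z ↦ z(1_G). -/
import Mathlib


open Pointwise

/-- The NUCA with memory `M` and configuration of local defining maps `s`. -/
def nuca {G A : Type*} [Group G] (M : Set G) (s : G → (M → A) → A)
    (x : G → A) : G → A :=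
  fun g => s g fun m => x (g * (m : G))

/-- For `1 ∈ M ∩ N`, the condition `σ_t(σ_s(x))(g) = x(g)` for all `x` is
equivalent to `t(g) ∘ γ_{g,N} ∘ f^{+M}_{gN, s|_{gN}} ∘ γ_{g,NM}⁻¹ = π`, where
`π : A^{NM} → A` is the evaluation at `1`.  The composite map
`γ_{g,N} ∘ f^{+M}_{gN, s|_{gN}} ∘ γ_{g,NM}⁻¹ : A^{NM} → A^N` sends
`z` to `n ↦ s(g n)(m ↦ z(n m))`. -/
theorem stmt2 {G A : Type*} [Group G] (M N : Set G)
    (h1M : (1 : G) ∈ M) (h1N : (1 : G) ∈ N)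
    (s : G → (M → A) → A) (t : G → (N → A) → A) (g : G) :
    (∀ x : G → A, nuca N t (nuca M s x) g = x g) ↔
      (∀ z : (N * M : Set G) → A,
        t g (fun n => s (g * (n : G))
            (fun m => z ⟨(n : G) * (m : G), Set.mul_mem_mul n.2 m.2⟩))
          = z ⟨1, by simpa using Set.mul_mem_mul h1N h1M⟩) := by
  classical
  have h1NM : (1 : G) ∈ (N * M : Set G) := by simpa using Set.mul_mem_mul h1N h1M
  constructor
  · intro h z
    set x : G → A := fun h' =>
      if hh : g⁻¹ * h' ∈ (N * M : Set G) then z ⟨g⁻¹ * h', hh⟩ else z ⟨1, h1NM⟩ with hx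
    have hxg : x g = z ⟨1, h1NM⟩ := by
      simp [hx, h1NM]
    have := h x
    rw [hxg] at this
    rw [← this]
    simp only [nuca]
    congr 1
    funext n
    congr 1
    funext m
    have hmem : g⁻¹ * (g * (n : G) * (m : G)) ∈ (N * M : Set G) := by
      have : g⁻¹ * (g * (n : G) * (m : G)) = (n : G) * (m : G) := by group
      rw [this]; exact Set.mul_mem_mul n.2 m.2
    simp only [hx, dif_pos hmem]
    congr 1
    ext
    group
  · intro h x
    have := h (fun p => x (g * (p : G)))
    simp only at this
    rw [show x g = x (g * (1 : G)) by rw [mul_one], ← this]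
    simp only [nuca]
    congr 1
    funext n
    congr 1
    funext m
    rw [mul_assoc]
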